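/- Let E = (E₁, E₂, E₃): ℝ³ → ℝ³ be measurable with finite weak L^{3/2} norm, let ω > 0 and s > 0 be such that ωs is not an integer multiple of 2π, and fix x ∈ ℝ³. Define D(s,·) from E as in the context and consider the map v ↦ D(s, X*(s,x,v)) on ℝ³. Then ‖D(s, X*(s,x,·))‖_{3/2,w} ≤ (√2 / s) (ω²s² / (2(1−cos(ωs))))^{2/3} ‖E‖_{3/2,w}, where ‖E‖²_{3/2,w} := ‖E₁‖²_{3/2,w} + ‖E₂‖²_{3/2,w} + ‖E₃‖²_{3/2,w}. -/

import Mathlib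

open MeasureTheory Real
open scoped ENNReal

/-- The weak `L^q` norm: `sup { |A|^{-1/q'} ∫_A |g| : 0 < |A| < ∞ }`,
where `|A|^{-1/q'} = |A|^{1/q - 1}`. -/
noncomputable def weakNorm {α : Type*} [MeasurableSpace α] (μ : Measure α) (q : ℝ)
    (g : α → ℝ) : ℝ≥0∞ :=
  ⨆ (A : Set α) (_ : MeasurableSet A) (_ : μ A ≠ 0) (_ : μ A ≠ ⊤),
    μ A ^ (1 / q - 1) * ∫⁻ x in A, ENNReal.ofReal |g x| ∂μ

/-- `X*(s,x,v)`, the space component of the inverted magnetized characteristics. -/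
noncomputable def Xstar (ω s : ℝ) (x v : Fin 3 → ℝ) : Fin 3 → ℝ :=
  ![x 0 - v 0 / ω * Real.sin (ω * s) + v 1 / ω * (Real.cos (ω * s) - 1),
    x 1 + v 0 / ω * (1 - Real.cos (ω * s)) - v 1 / ω * Real.sin (ω * s),
    x 2 - v 2 * s]

lemma term_le_weakNorm {α : Type*} [MeasurableSpace α] (μ : Measure α) (q : ℝ)
    (g : α → ℝ) {B : Set α} (hB : MeasurableSet B) (h0 : μ B ≠ 0) (ht : μ B ≠ ⊤) :
    μ B ^ (1 / q - 1) * ∫⁻ x in B, ENNReal.ofReal |g x| ∂μ ≤ weakNorm μ q g := by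
  unfold weakNorm
  exact le_iSup_of_le B (le_iSup_of_le hB (le_iSup_of_le h0 (le_iSup_of_le ht le_rfl)))

lemma weakNorm_le_add {α : Type*} [MeasurableSpace α] (μ : Measure α) (q : ℝ)
    (f g h : α → ℝ) (hf : Measurable f) (habs : ∀ v, |h v| ≤ |f v| + |g v|) :
    weakNorm μ q h ≤ weakNorm μ q f + weakNorm μ q g := by
  refine iSup_le fun A => iSup_le fun hA => iSup_le fun h0 => iSup_le fun htop => ?_
  have hint : ∫⁻ x in A, ENNReal.ofReal |h x| ∂μ
      ≤ (∫⁻ x in A, ENNReal.ofReal |f x| ∂μ) + ∫⁻ x in A, ENNReal.ofReal |g x| ∂μ := by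
    calc ∫⁻ x in A, ENNReal.ofReal |h x| ∂μ
        ≤ ∫⁻ x in A, (ENNReal.ofReal |f x| + ENNReal.ofReal |g x|) ∂μ :=
          lintegral_mono fun x =>
            le_trans (ENNReal.ofReal_le_ofReal (habs x)) ENNReal.ofReal_add_le
      _ = _ := lintegral_add_left (ENNReal.measurable_ofReal.comp hf.abs) _
  calc μ A ^ (1/q - 1) * ∫⁻ x in A, ENNReal.ofReal |h x| ∂μ
      ≤ μ A ^ (1/q - 1) *
          ((∫⁻ x in A, ENNReal.ofReal |f x| ∂μ) + ∫⁻ x in A, ENNReal.ofReal |g x| ∂μ) :=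
        mul_le_mul_right hint _
    _ = μ A ^ (1/q - 1) * ∫⁻ x in A, ENNReal.ofReal |f x| ∂μ
        + μ A ^ (1/q - 1) * ∫⁻ x in A, ENNReal.ofReal |g x| ∂μ := mul_add _ _ _
    _ ≤ _ := add_le_add (term_le_weakNorm μ q f hA h0 htop)
        (term_le_weakNorm μ q g hA h0 htop)

lemma weakNorm_const_mul {α : Type*} [MeasurableSpace α] (μ : Measure α) (q : ℝ)
    (a : ℝ) (g : α → ℝ) :
    weakNorm μ q (fun v => a * g v) ≤ ENNReal.ofReal |a| * weakNorm μ q g := by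
  refine iSup_le fun A => iSup_le fun hA => iSup_le fun h0 => iSup_le fun htop => ?_
  have hint : ∫⁻ x in A, ENNReal.ofReal |a * g x| ∂μ
      = ENNReal.ofReal |a| * ∫⁻ x in A, ENNReal.ofReal |g x| ∂μ := by
    simp_rw [abs_mul, ENNReal.ofReal_mul (abs_nonneg a)]
    exact lintegral_const_mul' _ _ ENNReal.ofReal_ne_top
  rw [hint, mul_left_comm]
  exact mul_le_mul_right (term_le_weakNorm μ q g hA h0 htop) _

lemma weakNorm_comp (L : (Fin 3 → ℝ) →ₗ[ℝ] (Fin 3 → ℝ)) (hL : LinearMap.det L ≠ 0)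
    (x₀ : Fin 3 → ℝ) (g : (Fin 3 → ℝ) → ℝ) (hg : Measurable g) :
    weakNorm volume (3/2) (fun v => g (x₀ + L v))
      ≤ ENNReal.ofReal (|LinearMap.det L|⁻¹ ^ ((2:ℝ)/3)) * weakNorm volume (3/2) g := by
  have hLmeas : Measurable L := L.continuous_of_finiteDimensional.measurable
  set T : (Fin 3 → ℝ) → (Fin 3 → ℝ) := fun v => x₀ + L v with hT
  have hTmeas : Measurable T := measurable_const.add hLmeas
  have hmap : Measure.map T volume = ENNReal.ofReal |(LinearMap.det L)⁻¹| • volume := by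
    have hcomp : T = (fun y => x₀ + y) ∘ L := rfl
    rw [hcomp, ← Measure.map_map (measurable_const_add x₀) hLmeas,
      Measure.map_linearMap_addHaar_eq_smul_addHaar volume hL, Measure.map_smul,
      map_add_left_eq_self]
  set c : ℝ≥0∞ := ENNReal.ofReal |(LinearMap.det L)⁻¹| with hc
  have hc0 : c ≠ 0 := by
    simp [hc, ENNReal.ofReal_eq_zero, not_le, abs_pos, inv_ne_zero hL, hL]
  have hctop : c ≠ ⊤ := ENNReal.ofReal_ne_top
  have hLinj : Function.Injective L := by
    intro a b hab
    have h2 := (L.equivOfDetNeZero hL).injective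
    apply h2
    simpa using hab
  have hTinj : Function.Injective T := by
    intro a b hab
    exact hLinj (by simpa [hT] using hab)
  refine iSup_le fun A => iSup_le fun hA => iSup_le fun h0 => iSup_le fun htop => ?_
  set e : (Fin 3 → ℝ) ≃ₗ[ℝ] (Fin 3 → ℝ) := L.equivOfDetNeZero hL with he
  have heL : ∀ v, e v = L v := fun v => by simp [he]
  set B : Set (Fin 3 → ℝ) := T '' A with hB
  have hBmeas : MeasurableSet B := by
    have : B = (fun y => e.symm (y - x₀)) ⁻¹' A := by
      ext y
      constructor
      · rintro ⟨v, hv, rfl⟩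
        have h1 : T v - x₀ = e v := by simp [hT, heL]
        show e.symm (T v - x₀) ∈ A
        rw [h1, e.symm_apply_apply]; exact hv
      · intro hy
        refine ⟨e.symm (y - x₀), hy, ?_⟩
        have h2 : L (e.symm (y - x₀)) = y - x₀ := by rw [← heL, e.apply_symm_apply]
        show x₀ + L (e.symm (y - x₀)) = y
        rw [h2]; abel
    rw [this]
    have : Measurable fun y : Fin 3 → ℝ => e.symm (y - x₀) :=
      (e.symm : (Fin 3 → ℝ) →ₗ[ℝ] (Fin 3 → ℝ)).continuous_of_finiteDimensional.measurable.comp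
        (measurable_id.sub measurable_const)
    exact this hA
  have hpre : T ⁻¹' B = A := Set.preimage_image_eq A hTinj
  have hmA : volume A = c * volume B := by
    rw [← hpre, ← Measure.map_apply hTmeas hBmeas, hmap]; rfl
  have hB0 : volume B ≠ 0 := by
    intro h; rw [hmA, h, mul_zero] at h0; exact h0 rfl
  have hBtop : volume B ≠ ⊤ := by
    intro h; rw [hmA, h, ENNReal.mul_top hc0] at htop; exact htop rfl
  have hint : ∫⁻ v in A, ENNReal.ofReal |g (T v)| ∂volume
      = c * ∫⁻ y in B, ENNReal.ofReal |g y| ∂volume := by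
    have hind : ∀ v, A.indicator (fun v => ENNReal.ofReal |g (T v)|) v
        = B.indicator (fun y => ENNReal.ofReal |g y|) (T v) := by
      intro v
      by_cases hv : v ∈ A
      · rw [Set.indicator_of_mem hv, Set.indicator_of_mem (by exact ⟨v, hv, rfl⟩)]
      · rw [Set.indicator_of_notMem hv, Set.indicator_of_notMem
          (fun hmem => hv (by rw [← hpre]; exact hmem))]
    have hmeasind : Measurable (B.indicator fun y => ENNReal.ofReal |g y|) :=
      (ENNReal.measurable_ofReal.comp hg.abs).indicator hBmeas
    calc ∫⁻ v in A, ENNReal.ofReal |g (T v)| ∂volume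
        = ∫⁻ v, A.indicator (fun v => ENNReal.ofReal |g (T v)|) v ∂volume := by
          rw [lintegral_indicator hA]
      _ = ∫⁻ v, B.indicator (fun y => ENNReal.ofReal |g y|) (T v) ∂volume := by
          simp_rw [hind]
      _ = ∫⁻ y, B.indicator (fun y => ENNReal.ofReal |g y|) y ∂(Measure.map T volume) :=
          (lintegral_map hmeasind hTmeas).symm
      _ = c * ∫⁻ y in B, ENNReal.ofReal |g y| ∂volume := by
          rw [hmap, lintegral_smul_measure, lintegral_indicator hBmeas, smul_eq_mul]
  rw [hmA, hint]
  have hrw : (c * volume B) ^ (1 / (3/2 : ℝ) - 1) * (c * ∫⁻ y in B, ENNReal.ofReal |g y| ∂volume)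
      = c ^ ((2:ℝ)/3) *
        (volume B ^ (1 / (3/2 : ℝ) - 1) * ∫⁻ y in B, ENNReal.ofReal |g y| ∂volume) := by
    rw [ENNReal.mul_rpow_of_ne_top hctop hBtop]
    have hcc : c ^ (1 / (3/2 : ℝ) - 1) * c = c ^ ((2:ℝ)/3) := by
      nth_rewrite 2 [← ENNReal.rpow_one c]
      rw [← ENNReal.rpow_add _ _ hc0 hctop]
      norm_num
    calc c ^ (1 / (3/2:ℝ) - 1) * volume B ^ (1 / (3/2:ℝ) - 1) *
          (c * ∫⁻ y in B, ENNReal.ofReal |g y| ∂volume)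
        = (c ^ (1 / (3/2:ℝ) - 1) * c) *
          (volume B ^ (1 / (3/2:ℝ) - 1) * ∫⁻ y in B, ENNReal.ofReal |g y| ∂volume) := by ring
      _ = _ := by rw [hcc]
  rw [hrw]
  have hcpow : c ^ ((2:ℝ)/3) = ENNReal.ofReal (|LinearMap.det L|⁻¹ ^ ((2:ℝ)/3)) := by
    rw [hc, ENNReal.ofReal_rpow_of_nonneg (abs_nonneg _) (by norm_num), abs_inv]
  rw [hcpow]
  exact mul_le_mul_right (term_le_weakNorm volume (3/2) g hBmeas hB0 hBtop) _

set_option maxHeartbeats 2000000 in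
/-- for the rotated field `D(s,·)` built from `E` and the change of
variables `v ↦ X*(s,x,v)`,
`‖D(s, X*(s,x,·))‖_{3/2,w} ≤ (√2/s)(ω²s²/(2(1−cos ωs)))^{2/3} ‖E‖_{3/2,w}`,
where the weak norm of a vector field is the square root of the sum of the squared
weak norms of its components. -/
theorem D_comp_Xstar_weakNorm (ω s : ℝ) (hω : 0 < ω) (hs : 0 < s)
    (hns : ¬ ∃ m : ℤ, ω * s = 2 * π * m)
    (E1 E2 E3 : (Fin 3 → ℝ) → ℝ)
    (hE1 : Measurable E1) (hE2 : Measurable E2) (hE3 : Measurable E3)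
    (hw1 : weakNorm volume (3 / 2) E1 < ⊤)
    (hw2 : weakNorm volume (3 / 2) E2 < ⊤)
    (hw3 : weakNorm volume (3 / 2) E3 < ⊤)
    (x : Fin 3 → ℝ) :
    (weakNorm volume (3 / 2)
        (fun v => -(Real.sin (ω * s) / ω) * E1 (Xstar ω s x v)
          + (Real.cos (ω * s) - 1) / ω * E2 (Xstar ω s x v)) ^ 2
      + weakNorm volume (3 / 2)
          (fun v => (1 - Real.cos (ω * s)) / ω * E1 (Xstar ω s x v)
            - Real.sin (ω * s) / ω * E2 (Xstar ω s x v)) ^ 2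
      + weakNorm volume (3 / 2) (fun v => -s * E3 (Xstar ω s x v)) ^ 2) ^ ((1 : ℝ) / 2)
    ≤ ENNReal.ofReal
        (Real.sqrt 2 / s * (ω ^ 2 * s ^ 2 / (2 * (1 - Real.cos (ω * s)))) ^ ((2 : ℝ) / 3))
      * (weakNorm volume (3 / 2) E1 ^ 2 + weakNorm volume (3 / 2) E2 ^ 2
          + weakNorm volume (3 / 2) E3 ^ 2) ^ ((1 : ℝ) / 2) := by
  have hpyth : Real.sin (ω*s)^2 + Real.cos (ω*s)^2 = 1 := Real.sin_sq_add_cos_sq (ω*s)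
  set σ : ℝ := Real.sin (ω * s) with hσdef
  set co : ℝ := Real.cos (ω * s) with hcodef
  -- basic trigonometric facts
  have hcne : co ≠ 1 := by
    intro h
    obtain ⟨n, hn⟩ := (Real.cos_eq_one_iff (ω*s)).1 h
    exact hns ⟨n, by linarith⟩
  have h1c : 0 < 1 - co := by
    have := Real.cos_le_one (ω*s)
    rw [← hcodef] at this
    rcases lt_or_eq_of_le this with h | h
    · linarith
    · exact absurd h hcne
  have hbig : 2 - 2*co ≤ ω^2*s^2 := by
    have h1 := Real.sin_sq_le_sq (x := ω*s/2)
    have h2 : Real.sin (ω*s/2)^2 = 1/2 - Real.cos (2*(ω*s/2))/2 := Real.sin_sq_eq_half_sub _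
    rw [show 2*(ω*s/2) = ω*s by ring, ← hcodef] at h2
    nlinarith
  -- the matrix and linear map
  set M : Matrix (Fin 3) (Fin 3) ℝ :=
    !![-(σ/ω), (co-1)/ω, 0; (1-co)/ω, -(σ/ω), 0; 0, 0, -s] with hM
  set L : (Fin 3 → ℝ) →ₗ[ℝ] (Fin 3 → ℝ) := Matrix.toLin' M with hLdef
  have hdet : LinearMap.det L = -(s*(2 - 2*co)/ω^2) := by
    rw [hLdef, LinearMap.det_toLin', hM, Matrix.det_fin_three]
    simp [Matrix.cons_val_zero, Matrix.cons_val_one, Matrix.head_cons]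
    field_simp
    linear_combination (-1 : ℝ) * hpyth
  have hdetpos : 0 < s*(2 - 2*co)/ω^2 := by
    apply div_pos (by nlinarith) (by positivity)
  have hdetne : LinearMap.det L ≠ 0 := by rw [hdet]; exact neg_ne_zero.2 (ne_of_gt hdetpos)
  have hadet : |LinearMap.det L| = s*(2 - 2*co)/ω^2 := by
    rw [hdet, abs_neg, abs_of_pos hdetpos]
  obtain ⟨K, hKdef⟩ : ∃ y : ℝ, y = |LinearMap.det L|⁻¹ ^ ((2:ℝ)/3) := ⟨_, rfl⟩
  have hK0 : 0 ≤ K := by rw [hKdef]; positivity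
  -- Xstar as affine map
  have hXeq : ∀ v, Xstar ω s x v = x + L v := by
    intro v; funext i
    fin_cases i <;>
      simp [Xstar, hLdef, hM, Matrix.toLin'_apply, Matrix.mulVec, dotProduct,
        Fin.sum_univ_three, ← hσdef, ← hcodef] <;> ring
  have hXmeas : Measurable (fun v => Xstar ω s x v) := by
    have : (fun v => Xstar ω s x v) = fun v => x + L v := funext hXeq
    rw [this]
    exact measurable_const.add L.continuous_of_finiteDimensional.measurable
  -- composition bounds
  have hcomp : ∀ (g : (Fin 3 → ℝ) → ℝ), Measurable g →
      weakNorm volume (3/2) (fun v => g (Xstar ω s x v))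
        ≤ ENNReal.ofReal K * weakNorm volume (3/2) g := by
    intro g hg
    have : (fun v => g (Xstar ω s x v)) = fun v => g (x + L v) :=
      funext fun v => by rw [hXeq v]
    rw [this, hKdef]
    exact weakNorm_comp L hdetne x g hg
  set N1 := weakNorm volume (3/2) E1 with hN1def
  set N2 := weakNorm volume (3/2) E2 with hN2def
  set N3 := weakNorm volume (3/2) E3 with hN3def
  obtain ⟨n1, hn1def⟩ : ∃ y : ℝ, y = N1.toReal := ⟨_, rfl⟩
  obtain ⟨n2, hn2def⟩ : ∃ y : ℝ, y = N2.toReal := ⟨_, rfl⟩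
  obtain ⟨n3, hn3def⟩ : ∃ y : ℝ, y = N3.toReal := ⟨_, rfl⟩
  have hn1 : N1 = ENNReal.ofReal n1 := by
    rw [hn1def]; exact (ENNReal.ofReal_toReal hw1.ne).symm
  have hn2 : N2 = ENNReal.ofReal n2 := by
    rw [hn2def]; exact (ENNReal.ofReal_toReal hw2.ne).symm
  have hn3 : N3 = ENNReal.ofReal n3 := by
    rw [hn3def]; exact (ENNReal.ofReal_toReal hw3.ne).symm
  have hn1p : 0 ≤ n1 := by rw [hn1def]; exact ENNReal.toReal_nonneg
  have hn2p : 0 ≤ n2 := by rw [hn2def]; exact ENNReal.toReal_nonneg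
  have hn3p : 0 ≤ n3 := by rw [hn3def]; exact ENNReal.toReal_nonneg
  obtain ⟨a, hadef⟩ : ∃ y : ℝ, y = |σ|/ω := ⟨_, rfl⟩
  obtain ⟨b, hbdef⟩ : ∃ y : ℝ, y = (1-co)/ω := ⟨_, rfl⟩
  have ha0 : 0 ≤ a := by rw [hadef]; positivity
  have hb0 : 0 ≤ b := by rw [hbdef]; positivity
  obtain ⟨d1, hd1def⟩ : ∃ y : ℝ, y = a*K*n1 + b*K*n2 := ⟨_, rfl⟩
  obtain ⟨d2, hd2def⟩ : ∃ y : ℝ, y = b*K*n1 + a*K*n2 := ⟨_, rfl⟩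
  obtain ⟨d3, hd3def⟩ : ∃ y : ℝ, y = s*K*n3 := ⟨_, rfl⟩
  have hd10 : 0 ≤ d1 := by
    rw [hd1def]
    exact add_nonneg (mul_nonneg (mul_nonneg ha0 hK0) hn1p)
      (mul_nonneg (mul_nonneg hb0 hK0) hn2p)
  have hd20 : 0 ≤ d2 := by
    rw [hd2def]
    exact add_nonneg (mul_nonneg (mul_nonneg hb0 hK0) hn1p)
      (mul_nonneg (mul_nonneg ha0 hK0) hn2p)
  have hd30 : 0 ≤ d3 := by
    rw [hd3def]
    exact mul_nonneg (mul_nonneg hs.le hK0) hn3p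
  -- bound the first component
  have habs1 : |(-(σ/ω))| = a := by rw [hadef, abs_neg, abs_div, abs_of_pos hω]
  have habs2 : |(co-1)/ω| = b := by
    rw [hbdef, abs_div, abs_of_pos hω, abs_of_neg (by linarith : co - 1 < 0)]; ring_nf
  have habs3 : |(1-co)/ω| = b := by rw [hbdef, abs_div, abs_of_pos hω, abs_of_pos h1c]
  have habs4 : |σ/ω| = a := by rw [hadef, abs_div, abs_of_pos hω]
  have hD1 : weakNorm volume (3/2)
      (fun v => -(σ/ω) * E1 (Xstar ω s x v) + (co-1)/ω * E2 (Xstar ω s x v))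
      ≤ ENNReal.ofReal d1 := by
    have h1 := weakNorm_le_add volume (3/2)
      (fun v => -(σ/ω) * E1 (Xstar ω s x v)) (fun v => (co-1)/ω * E2 (Xstar ω s x v))
      (fun v => -(σ/ω) * E1 (Xstar ω s x v) + (co-1)/ω * E2 (Xstar ω s x v))
      (measurable_const.mul (hE1.comp hXmeas)) (fun v => abs_add_le _ _)
    have h2 : weakNorm volume (3/2) (fun v => -(σ/ω) * E1 (Xstar ω s x v))
        ≤ ENNReal.ofReal (a*K*n1) := by
      calc weakNorm volume (3/2) (fun v => -(σ/ω) * E1 (Xstar ω s x v))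
          ≤ ENNReal.ofReal |(-(σ/ω))| * weakNorm volume (3/2) (fun v => E1 (Xstar ω s x v)) :=
            weakNorm_const_mul volume (3/2) _ _
        _ ≤ ENNReal.ofReal a * (ENNReal.ofReal K * N1) := by
            rw [habs1]; exact mul_le_mul_right (hcomp E1 hE1) _
        _ = ENNReal.ofReal (a*K*n1) := by
            rw [hn1, ← ENNReal.ofReal_mul hK0, ← ENNReal.ofReal_mul ha0, mul_assoc]
    have h3 : weakNorm volume (3/2) (fun v => (co-1)/ω * E2 (Xstar ω s x v))
        ≤ ENNReal.ofReal (b*K*n2) := by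
      calc weakNorm volume (3/2) (fun v => (co-1)/ω * E2 (Xstar ω s x v))
          ≤ ENNReal.ofReal |(co-1)/ω| * weakNorm volume (3/2) (fun v => E2 (Xstar ω s x v)) :=
            weakNorm_const_mul volume (3/2) _ _
        _ ≤ ENNReal.ofReal b * (ENNReal.ofReal K * N2) := by
            rw [habs2]; exact mul_le_mul_right (hcomp E2 hE2) _
        _ = ENNReal.ofReal (b*K*n2) := by
            rw [hn2, ← ENNReal.ofReal_mul hK0, ← ENNReal.ofReal_mul hb0, mul_assoc]
    have h4 := le_trans h1 (add_le_add h2 h3)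
    rw [hd1def, ENNReal.ofReal_add (by positivity) (by positivity)]
    exact h4
  have hD2 : weakNorm volume (3/2)
      (fun v => (1-co)/ω * E1 (Xstar ω s x v) - σ/ω * E2 (Xstar ω s x v))
      ≤ ENNReal.ofReal d2 := by
    have h1 := weakNorm_le_add volume (3/2)
      (fun v => (1-co)/ω * E1 (Xstar ω s x v)) (fun v => σ/ω * E2 (Xstar ω s x v))
      (fun v => (1-co)/ω * E1 (Xstar ω s x v) - σ/ω * E2 (Xstar ω s x v))
      (measurable_const.mul (hE1.comp hXmeas)) (fun v => abs_sub _ _)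
    have h2 : weakNorm volume (3/2) (fun v => (1-co)/ω * E1 (Xstar ω s x v))
        ≤ ENNReal.ofReal (b*K*n1) := by
      calc weakNorm volume (3/2) (fun v => (1-co)/ω * E1 (Xstar ω s x v))
          ≤ ENNReal.ofReal |(1-co)/ω| * weakNorm volume (3/2) (fun v => E1 (Xstar ω s x v)) :=
            weakNorm_const_mul volume (3/2) _ _
        _ ≤ ENNReal.ofReal b * (ENNReal.ofReal K * N1) := by
            rw [habs3]
            exact mul_le_mul_right (hcomp E1 hE1) _
        _ = ENNReal.ofReal (b*K*n1) := by
            rw [hn1, ← ENNReal.ofReal_mul hK0, ← ENNReal.ofReal_mul hb0, mul_assoc]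
    have h3 : weakNorm volume (3/2) (fun v => σ/ω * E2 (Xstar ω s x v))
        ≤ ENNReal.ofReal (a*K*n2) := by
      calc weakNorm volume (3/2) (fun v => σ/ω * E2 (Xstar ω s x v))
          ≤ ENNReal.ofReal |σ/ω| * weakNorm volume (3/2) (fun v => E2 (Xstar ω s x v)) :=
            weakNorm_const_mul volume (3/2) _ _
        _ ≤ ENNReal.ofReal a * (ENNReal.ofReal K * N2) := by
            rw [habs4]
            exact mul_le_mul_right (hcomp E2 hE2) _
        _ = ENNReal.ofReal (a*K*n2) := by
            rw [hn2, ← ENNReal.ofReal_mul hK0, ← ENNReal.ofReal_mul ha0, mul_assoc]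
    have h4 := le_trans h1 (add_le_add h2 h3)
    rw [hd2def, ENNReal.ofReal_add (by positivity) (by positivity)]
    exact h4
  have hD3 : weakNorm volume (3/2) (fun v => -s * E3 (Xstar ω s x v))
      ≤ ENNReal.ofReal d3 := by
    calc weakNorm volume (3/2) (fun v => -s * E3 (Xstar ω s x v))
        ≤ ENNReal.ofReal |(-s)| * weakNorm volume (3/2) (fun v => E3 (Xstar ω s x v)) :=
          weakNorm_const_mul volume (3/2) _ _
      _ ≤ ENNReal.ofReal s * (ENNReal.ofReal K * N3) := by
          rw [abs_neg, abs_of_pos hs]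
          exact mul_le_mul_right (hcomp E3 hE3) _
      _ = ENNReal.ofReal d3 := by
          rw [hn3, ← ENNReal.ofReal_mul hK0, ← ENNReal.ofReal_mul hs.le, hd3def, mul_assoc]
  -- assemble
  have hsum : weakNorm volume (3/2)
        (fun v => -(σ/ω) * E1 (Xstar ω s x v) + (co-1)/ω * E2 (Xstar ω s x v)) ^ 2
      + weakNorm volume (3/2)
        (fun v => (1-co)/ω * E1 (Xstar ω s x v) - σ/ω * E2 (Xstar ω s x v)) ^ 2
      + weakNorm volume (3/2) (fun v => -s * E3 (Xstar ω s x v)) ^ 2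
      ≤ ENNReal.ofReal (d1^2 + d2^2 + d3^2) := by
    have e : ENNReal.ofReal (d1^2 + d2^2 + d3^2)
        = ENNReal.ofReal d1 ^ 2 + ENNReal.ofReal d2 ^ 2 + ENNReal.ofReal d3 ^ 2 := by
      rw [ENNReal.ofReal_add (by positivity) (sq_nonneg d3),
        ENNReal.ofReal_add (sq_nonneg d1) (sq_nonneg d2),
        ENNReal.ofReal_pow hd10, ENNReal.ofReal_pow hd20, ENNReal.ofReal_pow hd30]
    rw [e]
    exact add_le_add (add_le_add (pow_le_pow_left₀ zero_le' hD1 2)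
      (pow_le_pow_left₀ zero_le' hD2 2)) (pow_le_pow_left₀ zero_le' hD3 2)
  have hRHSsum : N1 ^ 2 + N2 ^ 2 + N3 ^ 2 = ENNReal.ofReal (n1^2 + n2^2 + n3^2) := by
    rw [hn1, hn2, hn3, ENNReal.ofReal_add (by positivity) (sq_nonneg n3),
      ENNReal.ofReal_add (sq_nonneg n1) (sq_nonneg n2),
      ENNReal.ofReal_pow hn1p, ENNReal.ofReal_pow hn2p, ENNReal.ofReal_pow hn3p]
  -- the key real inequalities
  have hab : a^2 + b^2 ≤ s^2 := by
    rw [hadef, hbdef, div_pow, div_pow, sq_abs, ← add_div,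
      div_le_iff₀ (by positivity : (0:ℝ) < ω^2)]
    nlinarith
  have hP : d1^2 + d2^2 + d3^2 ≤ 2*s^2*K^2*(n1^2 + n2^2 + n3^2) := by
    rw [hd1def, hd2def, hd3def]
    have key1 : (a*n1+b*n2)^2 + (b*n1+a*n2)^2 ≤ 2*(a^2+b^2)*(n1^2+n2^2) := by
      nlinarith [sq_nonneg (a*n1-b*n2), sq_nonneg (a*n2-b*n1)]
    have key2 : 2*(a^2+b^2)*(n1^2+n2^2) ≤ 2*s^2*(n1^2+n2^2) := by
      have h6 : (0:ℝ) ≤ n1^2+n2^2 := by positivity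
      nlinarith [mul_le_mul_of_nonneg_right hab h6]
    have k2 : (0:ℝ) ≤ K^2 := sq_nonneg K
    have h7 := mul_le_mul_of_nonneg_left (key1.trans key2) k2
    have h5 : (0:ℝ) ≤ s^2*K^2*n3^2 := by positivity
    calc (a*K*n1 + b*K*n2)^2 + (b*K*n1 + a*K*n2)^2 + (s*K*n3)^2
        = K^2*((a*n1+b*n2)^2 + (b*n1+a*n2)^2) + s^2*K^2*n3^2 := by ring
      _ ≤ K^2*(2*s^2*(n1^2+n2^2)) + s^2*K^2*n3^2 := by linarith
      _ ≤ 2*s^2*K^2*(n1^2 + n2^2 + n3^2) := by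
          have e9 : 2*s^2*K^2*(n1^2+n2^2+n3^2) - (K^2*(2*s^2*(n1^2+n2^2)) + s^2*K^2*n3^2)
              = s^2*K^2*n3^2 := by ring
          linarith [h5, e9]
  have hCgK : Real.sqrt 2 / s * (ω ^ 2 * s ^ 2 / (2 * (1 - co))) ^ ((2:ℝ)/3)
      = Real.sqrt 2 * s * K := by
    rw [hKdef, hadet]
    have hp : (0:ℝ) < ω^2/(2*(1-co)) := by positivity
    have e1 : ω^2*s^2/(2*(1-co)) = (ω^2/(2*(1-co))) * s^2 := by ring
    have e2 : (s*(2-2*co)/ω^2)⁻¹ = (ω^2/(2*(1-co))) / s := by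
      have h2c : (0:ℝ) < 2-2*co := by linarith
      field_simp
    rw [e1, e2, Real.mul_rpow hp.le (sq_nonneg s), Real.div_rpow hp.le hs.le]
    have h1 : ((s^2:ℝ)) ^ ((2:ℝ)/3) = s ^ ((4:ℝ)/3) := by
      rw [← Real.rpow_natCast s 2, ← Real.rpow_mul hs.le]; norm_num
    have h3 : s ^ ((2:ℝ)/3) * s ^ ((4:ℝ)/3) = s^2 := by
      rw [← Real.rpow_add hs, ← Real.rpow_natCast s 2]; norm_num
    have hs23 : (0:ℝ) < s ^ ((2:ℝ)/3) := Real.rpow_pos_of_pos hs _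
    rw [h1, div_mul_eq_mul_div, ← mul_div_assoc, div_eq_div_iff hs.ne' hs23.ne']
    linear_combination (Real.sqrt 2 * (ω^2/(2*(1-co)))^((2:ℝ)/3)) * h3
  have hCg0 : (0:ℝ) ≤ Real.sqrt 2 / s * (ω ^ 2 * s ^ 2 / (2 * (1 - co))) ^ ((2:ℝ)/3) := by
    positivity
  have hreal : (d1^2 + d2^2 + d3^2) ^ ((1:ℝ)/2)
      ≤ (Real.sqrt 2 / s * (ω ^ 2 * s ^ 2 / (2 * (1 - co))) ^ ((2:ℝ)/3))
        * (n1^2 + n2^2 + n3^2) ^ ((1:ℝ)/2) := by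
    have hPr0 : (0:ℝ) ≤ d1^2 + d2^2 + d3^2 := by positivity
    have hQr0 : (0:ℝ) ≤ n1^2 + n2^2 + n3^2 := by positivity
    have hCK0 : (0:ℝ) ≤ Real.sqrt 2 * s * K := by positivity
    have h4 : d1^2 + d2^2 + d3^2 ≤ (Real.sqrt 2 * s * K)^2 * (n1^2 + n2^2 + n3^2) := by
      have hsq : (Real.sqrt 2 * s * K)^2 = 2*s^2*K^2 := by
        rw [mul_pow, mul_pow, Real.sq_sqrt (by norm_num : (0:ℝ) ≤ 2)]
      rw [hsq]; exact hP
    rw [hCgK]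
    calc (d1^2 + d2^2 + d3^2) ^ ((1:ℝ)/2)
        ≤ ((Real.sqrt 2 * s * K)^2 * (n1^2 + n2^2 + n3^2)) ^ ((1:ℝ)/2) :=
          Real.rpow_le_rpow hPr0 h4 (by norm_num)
      _ = ((Real.sqrt 2 * s * K)^2) ^ ((1:ℝ)/2) * (n1^2 + n2^2 + n3^2) ^ ((1:ℝ)/2) :=
          Real.mul_rpow (sq_nonneg _) hQr0
      _ = (Real.sqrt 2 * s * K) * (n1^2 + n2^2 + n3^2) ^ ((1:ℝ)/2) := by
          rw [← Real.rpow_natCast (Real.sqrt 2 * s * K) 2, ← Real.rpow_mul hCK0]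
          norm_num
  -- conclude
  calc (weakNorm volume (3/2)
        (fun v => -(σ/ω) * E1 (Xstar ω s x v) + (co-1)/ω * E2 (Xstar ω s x v)) ^ 2
      + weakNorm volume (3/2)
        (fun v => (1-co)/ω * E1 (Xstar ω s x v) - σ/ω * E2 (Xstar ω s x v)) ^ 2
      + weakNorm volume (3/2) (fun v => -s * E3 (Xstar ω s x v)) ^ 2) ^ ((1:ℝ)/2)
      ≤ (ENNReal.ofReal (d1^2 + d2^2 + d3^2)) ^ ((1:ℝ)/2) :=
        ENNReal.rpow_le_rpow hsum (by norm_num)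
    _ = ENNReal.ofReal ((d1^2 + d2^2 + d3^2) ^ ((1:ℝ)/2)) :=
        ENNReal.ofReal_rpow_of_nonneg (by positivity) (by norm_num)
    _ ≤ ENNReal.ofReal ((Real.sqrt 2 / s * (ω ^ 2 * s ^ 2 / (2 * (1 - co))) ^ ((2:ℝ)/3))
          * (n1^2 + n2^2 + n3^2) ^ ((1:ℝ)/2)) := ENNReal.ofReal_le_ofReal hreal
    _ = ENNReal.ofReal (Real.sqrt 2 / s * (ω ^ 2 * s ^ 2 / (2 * (1 - co))) ^ ((2:ℝ)/3))
          * ENNReal.ofReal ((n1^2 + n2^2 + n3^2) ^ ((1:ℝ)/2)) := ENNReal.ofReal_mul hCg0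
    _ = ENNReal.ofReal (Real.sqrt 2 / s * (ω ^ 2 * s ^ 2 / (2 * (1 - co))) ^ ((2:ℝ)/3))
          * (N1 ^ 2 + N2 ^ 2 + N3 ^ 2) ^ ((1:ℝ)/2) := by
        rw [hRHSsum, ENNReal.ofReal_rpow_of_nonneg (by positivity) (by norm_num)]
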